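/- Fix m > 0 and let ω(x) = √(m x φ(x/m)). Let T > 0, K ≥ 0, y₀ ≥ 0, and let y : [0,T] → [0,∞) be continuous and satisfy y(t) ≤ y₀ + K ∫₀^t s^{−1/2} ω(y(s)) ds for all t ∈ [0,T]. Then for every t ∈ [0,T], ∫_{(y₀, y(t)]} 1/ω(r) dr ≤ 2 K √t (the integral being interpreted as 0 when y(t) ≤ y₀). -/

import Mathlib

open Real Set MeasureTheory
open scoped ENNReal

noncomputable section

/-- The concave modulus `φ` from the paper: `φ(x) = x (log x)²` for
`x ≤ e^{-1-√2}` (with `φ(0) = 0`, using `log 0 = 0`), and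
`φ(x) = x + 2(1+√2)e^{-1-√2}` beyond the junction point. -/
def phi (x : ℝ) : ℝ :=
  if x ≤ Real.exp (-1 - Real.sqrt 2) then x * Real.log x ^ 2
  else x + 2 * (1 + Real.sqrt 2) * Real.exp (-1 - Real.sqrt 2)

/-- The modulus `ω(x) = √(m x φ(x/m))` associated with mass `m`. -/
def omega (m x : ℝ) : ℝ := Real.sqrt (m * x * phi (x / m))

lemma sqrt2_gt_one : (1:ℝ) < Real.sqrt 2 := by
  rw [show (1:ℝ) = Real.sqrt 1 by simp]
  exact Real.sqrt_lt_sqrt (by norm_num) (by norm_num)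

lemma c_pos : 0 < Real.exp (-1 - Real.sqrt 2) := Real.exp_pos _

lemma log_c : Real.log (Real.exp (-1 - Real.sqrt 2)) = -1 - Real.sqrt 2 := Real.log_exp _

lemma log_lt_of_le_c {x : ℝ} (hx : 0 < x) (hxc : x ≤ Real.exp (-1 - Real.sqrt 2)) :
    Real.log x < -2 := by
  have h1 : Real.log x ≤ -1 - Real.sqrt 2 := by
    calc Real.log x ≤ Real.log (Real.exp (-1 - Real.sqrt 2)) :=
          Real.log_le_log hx hxc
    _ = -1 - Real.sqrt 2 := log_c
  have := sqrt2_gt_one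
  linarith

lemma branch1_strictMono :
    StrictMonoOn (fun x : ℝ => x * Real.log x ^ 2) (Ioc 0 (Real.exp (-1 - Real.sqrt 2))) := by
  apply strictMonoOn_of_deriv_pos (convex_Ioc _ _)
  · exact continuousOn_id.mul ((Real.continuousOn_log.mono (fun x hx => by
      simp only [mem_compl_iff, mem_singleton_iff]
      exact ne_of_gt hx.1)).pow 2)
  · intro x hx
    rw [interior_Ioc] at hx
    have hx0 : 0 < x := hx.1
    have hd : HasDerivAt (fun x : ℝ => x * Real.log x ^ 2)
        (1 * Real.log x ^ 2 + x * (2 * Real.log x ^ 1 * x⁻¹)) x :=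
      (hasDerivAt_id x).mul ((Real.hasDerivAt_log hx0.ne').pow 2)
    rw [hd.deriv]
    have hL : Real.log x < -2 := log_lt_of_le_c hx0 hx.2.le
    have hxx : x * (2 * Real.log x ^ 1 * x⁻¹) = 2 * Real.log x := by
      field_simp
    rw [hxx]
    nlinarith

lemma phi_nonneg {x : ℝ} (hx : 0 ≤ x) : 0 ≤ phi x := by
  unfold phi
  split
  · positivity
  · have := c_pos
    have := sqrt2_gt_one
    nlinarith

lemma phi_pos {x : ℝ} (hx : 0 < x) : 0 < phi x := by
  unfold phi
  split
  · rename_i h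
    have hL := log_lt_of_le_c hx h
    have h2 : 0 < Real.log x ^ 2 := by nlinarith
    exact mul_pos hx h2
  · have := c_pos
    have := sqrt2_gt_one
    nlinarith

lemma phi_c : phi (Real.exp (-1 - Real.sqrt 2)) =
    Real.exp (-1 - Real.sqrt 2) + 2 * (1 + Real.sqrt 2) * Real.exp (-1 - Real.sqrt 2) := by
  have h2 : Real.sqrt 2 ^ 2 = 2 := Real.sq_sqrt (by norm_num)
  unfold phi
  rw [if_pos le_rfl, log_c]
  nlinarith [c_pos]

lemma phi_mono : MonotoneOn phi (Ici 0) := by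
  intro a ha b hb hab
  simp only [mem_Ici] at ha hb
  by_cases hbc : b ≤ Real.exp (-1 - Real.sqrt 2)
  · have hac : a ≤ Real.exp (-1 - Real.sqrt 2) := le_trans hab hbc
    unfold phi
    rw [if_pos hac, if_pos hbc]
    rcases eq_or_lt_of_le ha with h0 | h0
    · rw [← h0]
      simp
      positivity
    · rcases eq_or_lt_of_le hab with rfl | hab'
      · rfl
      · exact (branch1_strictMono ⟨h0, hac⟩ ⟨h0.trans hab', hbc⟩ hab').le
  · by_cases hac : a ≤ Real.exp (-1 - Real.sqrt 2)
    · unfold phi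
      rw [if_pos hac, if_neg hbc]
      push_neg at hbc
      have h1 : a * Real.log a ^ 2 ≤ phi (Real.exp (-1 - Real.sqrt 2)) := by
        unfold phi
        rw [if_pos le_rfl]
        rcases eq_or_lt_of_le ha with h0 | h0
        · rw [← h0]
          simp
          positivity
        · rcases eq_or_lt_of_le hac with heq | hlt
          · rw [heq]
          · exact (branch1_strictMono ⟨h0, hac⟩ ⟨c_pos, le_rfl⟩ hlt).le
      calc a * Real.log a ^ 2 ≤ phi (Real.exp (-1 - Real.sqrt 2)) := h1
      _ = Real.exp (-1 - Real.sqrt 2) + 2 * (1 + Real.sqrt 2) * Real.exp (-1 - Real.sqrt 2) := phi_c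
      _ ≤ b + 2 * (1 + Real.sqrt 2) * Real.exp (-1 - Real.sqrt 2) := by linarith
    · unfold phi
      rw [if_neg hac, if_neg hbc]
      linarith

lemma junction : Real.exp (-1 - Real.sqrt 2) * Real.log (Real.exp (-1 - Real.sqrt 2)) ^ 2 =
    Real.exp (-1 - Real.sqrt 2) + 2 * (1 + Real.sqrt 2) * Real.exp (-1 - Real.sqrt 2) := by
  have h2 : Real.sqrt 2 ^ 2 = 2 := Real.sq_sqrt (by norm_num)
  rw [log_c]
  nlinarith [c_pos]

lemma phi_eq_of_le {x : ℝ} (h : x ≤ Real.exp (-1 - Real.sqrt 2)) :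
    phi x = x * Real.log x ^ 2 := if_pos h

lemma phi_eq_of_gt {x : ℝ} (h : Real.exp (-1 - Real.sqrt 2) < x) :
    phi x = x + 2 * (1 + Real.sqrt 2) * Real.exp (-1 - Real.sqrt 2) := if_neg (not_le.mpr h)

lemma phi_contAt {x : ℝ} (hx : 0 < x) : ContinuousAt phi x := by
  have hb1 : ∀ z : ℝ, z ≠ 0 → ContinuousAt (fun x : ℝ => x * Real.log x ^ 2) z := fun z hz =>
    continuousAt_id.mul ((Real.continuousAt_log hz).pow 2)
  have hb2 : Continuous (fun x : ℝ => x + 2 * (1 + Real.sqrt 2) * Real.exp (-1 - Real.sqrt 2)) :=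
    continuous_id.add continuous_const
  rcases lt_trichotomy x (Real.exp (-1 - Real.sqrt 2)) with hlt | heq | hgt
  · apply (hb1 x hx.ne').congr
    filter_upwards [Iio_mem_nhds hlt] with y hy
    exact (phi_eq_of_le (le_of_lt hy)).symm
  · have h1 : ContinuousWithinAt phi (Iic x) x := by
      refine ((hb1 x hx.ne').continuousWithinAt).congr (fun y hy => phi_eq_of_le ?_) ?_
      · exact heq ▸ (mem_Iic.mp hy)
      · exact phi_eq_of_le heq.le
    have h2 : ContinuousWithinAt phi (Ici x) x := by
      refine (hb2.continuousAt.continuousWithinAt).congr (fun y hy => ?_) ?_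
      · rcases eq_or_lt_of_le (mem_Ici.mp hy) with rfl | hlt2
        · rw [phi_eq_of_le heq.le, heq]
          exact junction
        · exact phi_eq_of_gt (heq ▸ hlt2)
      · rw [phi_eq_of_le heq.le, heq]
        exact junction
    have h3 := h1.union h2
    rw [Iic_union_Ici] at h3
    exact (continuousWithinAt_univ phi x).mp h3
  · apply (hb2.continuousAt).congr
    filter_upwards [Ioi_mem_nhds hgt] with y hy
    exact (phi_eq_of_gt hy).symm

lemma phi_measurable : Measurable phi := by
  unfold phi
  exact Measurable.ite (measurableSet_le measurable_id measurable_const)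
    (measurable_id.mul (Real.measurable_log.pow_const 2))
    (measurable_id.add_const _)

lemma omega_nonneg (m x : ℝ) : 0 ≤ omega m x := Real.sqrt_nonneg _

lemma omega_mono {m : ℝ} (hm : 0 < m) : MonotoneOn (omega m) (Ici 0) := by
  intro a ha b hb hab
  simp only [mem_Ici] at ha hb
  apply Real.sqrt_le_sqrt
  have h1 : phi (a / m) ≤ phi (b / m) :=
    phi_mono (mem_Ici.mpr (by positivity)) (mem_Ici.mpr (by positivity)) (by gcongr)
  have h2 : 0 ≤ phi (a / m) := phi_nonneg (by positivity)
  have h3 : m * a ≤ m * b := by nlinarith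
  exact mul_le_mul h3 h1 h2 (by positivity)

lemma omega_pos {m x : ℝ} (hm : 0 < m) (hx : 0 < x) : 0 < omega m x := by
  apply Real.sqrt_pos.mpr
  have := phi_pos (show 0 < x / m by positivity)
  positivity

lemma omega_contAt {m x : ℝ} (hm : 0 < m) (hx : 0 < x) : ContinuousAt (omega m) x := by
  unfold omega
  apply Real.continuous_sqrt.continuousAt.comp
  exact (continuousAt_const.mul continuousAt_id).mul
    ((phi_contAt (by positivity)).comp (continuousAt_id.div_const m))

lemma omega_contOn {m : ℝ} (hm : 0 < m) : ContinuousOn (omega m) (Ioi 0) :=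
  fun x hx => (omega_contAt hm (mem_Ioi.mp hx)).continuousWithinAt

lemma omega_measurable (m : ℝ) : Measurable (omega m) := by
  unfold omega
  exact Real.continuous_sqrt.measurable.comp
    ((measurable_const.mul measurable_id).mul (phi_measurable.comp (measurable_id.div_const m)))

lemma inv_omega_contOn {m y₀ : ℝ} (hm : 0 < m) (hy₀ : 0 < y₀) :
    ContinuousOn (fun r => (omega m r)⁻¹) (Ici y₀) := by
  apply ContinuousOn.inv₀
  · exact (omega_contOn hm).mono (fun x hx => lt_of_lt_of_le hy₀ hx)
  · exact fun x hx => (omega_pos hm (lt_of_lt_of_le hy₀ hx)).ne'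

lemma sqrt_inv_integrableOn {T : ℝ} (hT : 0 < T) :
    IntegrableOn (fun s : ℝ => (Real.sqrt s)⁻¹) (Ioc 0 T) := by
  have h : IntervalIntegrable (fun s : ℝ => s ^ (-(1/2) : ℝ)) volume 0 T :=
    intervalIntegral.intervalIntegrable_rpow' (by norm_num)
  have h2 : IntegrableOn (fun s : ℝ => s ^ (-(1/2) : ℝ)) (Ioc 0 T) :=
    (intervalIntegrable_iff_integrableOn_Ioc_of_le hT.le).mp h
  apply h2.congr_fun ?_ measurableSet_Ioc
  intro s hs
  show s ^ (-(1/2) : ℝ) = (Real.sqrt s)⁻¹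
  rw [Real.rpow_neg hs.1.le, Real.sqrt_eq_rpow]

lemma aux_int {m T : ℝ} (hm : 0 < m) (hT : 0 < T) {w : ℝ → ℝ}
    (hw : ContinuousOn w (Icc 0 T)) (hwnn : ∀ s ∈ Icc 0 T, 0 ≤ w s) :
    IntegrableOn (fun s => (Real.sqrt s)⁻¹ * omega m (w s)) (Ioc 0 T) := by
  obtain ⟨sM, hsM, hmax⟩ := isCompact_Icc.exists_isMaxOn (nonempty_Icc.mpr hT.le) hw
  set C := omega m (w sM) with hC
  have hbound : ∀ s ∈ Ioc 0 T, omega m (w s) ≤ C := by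
    intro s hs
    have hs' : s ∈ Icc 0 T := Ioc_subset_Icc_self hs
    exact omega_mono hm (mem_Ici.mpr (hwnn s hs')) (mem_Ici.mpr (hwnn sM hsM)) (hmax hs')
  have hmeas : AEStronglyMeasurable (fun s => (Real.sqrt s)⁻¹ * omega m (w s))
      (volume.restrict (Ioc 0 T)) := by
    have hw' : AEMeasurable w (volume.restrict (Ioc 0 T)) :=
      (hw.aemeasurable measurableSet_Icc).mono_measure
        (Measure.restrict_mono Ioc_subset_Icc_self le_rfl)
    exact ((Real.continuous_sqrt.measurable.inv.aemeasurable).mul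
      ((omega_measurable m).comp_aemeasurable hw')).aestronglyMeasurable
  apply Integrable.mono' ((sqrt_inv_integrableOn hT).mul_const C) hmeas
  rw [ae_restrict_iff' measurableSet_Ioc]
  filter_upwards with s hs
  rw [Real.norm_eq_abs, abs_of_nonneg (mul_nonneg (by positivity) (omega_nonneg m _))]
  exact mul_le_mul_of_nonneg_left (hbound s hs) (by positivity)

lemma main_pos (m : ℝ) (hm : 0 < m) (T K y₀ : ℝ) (hT : 0 < T)
    (hK : 0 ≤ K) (hy₀ : 0 < y₀) (y : ℝ → ℝ)
    (hc : ContinuousOn y (Set.Icc 0 T))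
    (hnn : ∀ t ∈ Set.Icc 0 T, 0 ≤ y t)
    (hineq : ∀ t ∈ Set.Icc 0 T,
      y t ≤ y₀ + K * ∫ s in (0:ℝ)..t, (Real.sqrt s)⁻¹ * omega m (y s)) :
    ∀ t ∈ Set.Icc 0 T,
      ∫⁻ r in Set.Ioc y₀ (y t), ENNReal.ofReal (1 / omega m r)
        ≤ ENNReal.ofReal (2 * K * Real.sqrt t) := by
  set g : ℝ → ℝ := fun s => (Real.sqrt s)⁻¹ * omega m (y s) with hg_def
  set B : ℝ → ℝ := fun t => y₀ + K * ∫ s in (0:ℝ)..t, g s with hB_def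
  -- integrability of g
  have hg_int : IntegrableOn g (Ioc 0 T) := aux_int hm hT hc hnn
  have hg_ii : ∀ t ∈ Icc 0 T, IntervalIntegrable g volume 0 t := fun t ht =>
    (intervalIntegrable_iff_integrableOn_Ioc_of_le ht.1).mpr
      (hg_int.mono_set (Ioc_subset_Ioc le_rfl ht.2))
  have hgnn : ∀ s, 0 ≤ g s := fun s =>
    mul_nonneg (by positivity) (omega_nonneg m _)
  have hB0 : ∀ t ∈ Icc 0 T, y₀ ≤ B t := by
    intro t ht
    have h1 : 0 ≤ ∫ s in (0:ℝ)..t, g s :=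
      intervalIntegral.integral_nonneg ht.1 (fun u _ => hgnn u)
    simp only [hB_def]
    nlinarith
  have hBpos : ∀ t ∈ Icc 0 T, 0 < B t := fun t ht => lt_of_lt_of_le hy₀ (hB0 t ht)
  have hBcont : ContinuousOn B (Icc 0 T) := by
    have hprim : ContinuousOn (fun b => ∫ s in (0:ℝ)..b, g s) (Icc 0 T) := by
      have h := intervalIntegral.continuousOn_primitive_interval'
        (hg_ii T (right_mem_Icc.mpr hT.le))
        (by rw [uIcc_of_le hT.le]; exact left_mem_Icc.mpr hT.le)
      rwa [uIcc_of_le hT.le] at h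
    exact continuousOn_const.add (continuousOn_const.mul hprim)
  -- the majorant z
  set g2 : ℝ → ℝ := fun s => (Real.sqrt s)⁻¹ * omega m (B s) with hg2_def
  set z : ℝ → ℝ := fun t => y₀ + K * ∫ s in (0:ℝ)..t, g2 s with hz_def
  have hg2_int : IntegrableOn g2 (Ioc 0 T) :=
    aux_int hm hT hBcont (fun s hs => (hBpos s hs).le)
  have hg2_ii : ∀ t ∈ Icc 0 T, IntervalIntegrable g2 volume 0 t := fun t ht =>
    (intervalIntegrable_iff_integrableOn_Ioc_of_le ht.1).mpr
      (hg2_int.mono_set (Ioc_subset_Ioc le_rfl ht.2))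
  have hg2nn : ∀ s, 0 ≤ g2 s := fun s =>
    mul_nonneg (by positivity) (omega_nonneg m _)
  have hyB : ∀ t ∈ Icc 0 T, y t ≤ B t := hineq
  have hgg2 : ∀ s ∈ Icc 0 T, g s ≤ g2 s := by
    intro s hs
    exact mul_le_mul_of_nonneg_left
      (omega_mono hm (mem_Ici.mpr (hnn s hs)) (mem_Ici.mpr (hBpos s hs).le) (hyB s hs))
      (by positivity)
  have hz0 : ∀ t ∈ Icc 0 T, y₀ ≤ z t := by
    intro t ht
    have h1 : 0 ≤ ∫ s in (0:ℝ)..t, g2 s :=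
      intervalIntegral.integral_nonneg ht.1 (fun u _ => hg2nn u)
    simp only [hz_def]
    nlinarith
  have hzpos : ∀ t ∈ Icc 0 T, 0 < z t := fun t ht => lt_of_lt_of_le hy₀ (hz0 t ht)
  have hBz : ∀ t ∈ Icc 0 T, B t ≤ z t := by
    intro t ht
    have h1 : (∫ s in (0:ℝ)..t, g s) ≤ ∫ s in (0:ℝ)..t, g2 s := by
      apply intervalIntegral.integral_mono_on ht.1 (hg_ii t ht) (hg2_ii t ht)
      intro s hs
      exact hgg2 s ⟨hs.1, hs.2.trans ht.2⟩
    simp only [hB_def, hz_def]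
    nlinarith
  have hzcont : ContinuousOn z (Icc 0 T) := by
    have hprim : ContinuousOn (fun b => ∫ s in (0:ℝ)..b, g2 s) (Icc 0 T) := by
      have h := intervalIntegral.continuousOn_primitive_interval'
        (hg2_ii T (right_mem_Icc.mpr hT.le))
        (by rw [uIcc_of_le hT.le]; exact left_mem_Icc.mpr hT.le)
      rwa [uIcc_of_le hT.le] at h
    exact continuousOn_const.add (continuousOn_const.mul hprim)
  have hzmono : MonotoneOn z (Icc 0 T) := by
    intro t1 ht1 t2 ht2 h12
    have h1 : (∫ s in (0:ℝ)..t1, g2 s) ≤ ∫ s in (0:ℝ)..t2, g2 s := by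
      apply intervalIntegral.integral_mono_interval le_rfl ht1.1 h12
      · exact Filter.Eventually.of_forall fun s => hg2nn s
      · exact hg2_ii t2 ht2
    simp only [hz_def]
    nlinarith
  set Z := z T with hZ_def
  have hzZ : ∀ t ∈ Icc 0 T, z t ≤ Z := fun t ht =>
    hzmono ht (right_mem_Icc.mpr hT.le) ht.2
  have hy₀Z : y₀ ≤ Z := hz0 T (right_mem_Icc.mpr hT.le)
  -- the function G
  set f : ℝ → ℝ := fun r => (omega m r)⁻¹ with hf_def
  have hf_contOn : ContinuousOn f (Ici y₀) := inv_omega_contOn hm hy₀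
  have hf_contOn_Ioi : ContinuousOn f (Ioi 0) :=
    ContinuousOn.inv₀ (omega_contOn hm) (fun x hx => (omega_pos hm hx).ne')
  have hf_ii : ∀ u, y₀ ≤ u → IntervalIntegrable f volume y₀ u := by
    intro u hu
    apply ContinuousOn.intervalIntegrable
    rw [uIcc_of_le hu]
    exact hf_contOn.mono (fun x hx => hx.1)
  set G : ℝ → ℝ := fun u => ∫ r in y₀..u, f r with hG_def
  have hGcont : ContinuousOn G (Icc y₀ Z) := by
    have h := intervalIntegral.continuousOn_primitive_interval'
      (hf_ii Z hy₀Z) (by rw [uIcc_of_le hy₀Z]; exact left_mem_Icc.mpr hy₀Z)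
    rwa [uIcc_of_le hy₀Z] at h
  set H : ℝ → ℝ := fun t => G (z t) - 2 * K * Real.sqrt t with hH_def
  have hHcont : ContinuousOn H (Icc 0 T) := by
    apply ContinuousOn.sub
    · exact hGcont.comp hzcont (fun t ht => ⟨hz0 t ht, hzZ t ht⟩)
    · exact (continuous_const.mul Real.continuous_sqrt).continuousOn
  -- derivative of H on the interior
  have hHd : ∀ t ∈ Ioo 0 T, HasDerivAt H
      (f (z t) * (K * g2 t) - 2 * K * (1 / (2 * Real.sqrt t))) t := by
    intro t ht
    have ht' : t ∈ Icc 0 T := Ioo_subset_Icc_self ht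
    have hzd : HasDerivAt z (K * g2 t) t := by
      have hmeasAt : StronglyMeasurableAtFilter g2 (nhds t) volume :=
        ⟨Ioo 0 T, Ioo_mem_nhds ht.1 ht.2,
          (hg2_int.mono_set Ioo_subset_Ioc_self).aestronglyMeasurable⟩
      have hcontAt : ContinuousAt g2 t := by
        have h1 : ContinuousAt (fun s : ℝ => (Real.sqrt s)⁻¹) t :=
          (Real.continuous_sqrt.continuousAt).inv₀ (Real.sqrt_ne_zero'.mpr ht.1)
        have hBat : ContinuousAt B t := hBcont.continuousAt (Icc_mem_nhds ht.1 ht.2)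
        exact h1.mul ((omega_contAt hm (hBpos t ht')).comp hBat)
      have hI : HasDerivAt (fun u => ∫ s in (0:ℝ)..u, g2 s) (g2 t) t :=
        intervalIntegral.integral_hasDerivAt_right (hg2_ii t ht') hmeasAt hcontAt
      exact (hI.const_mul K).const_add y₀
    have hGd : HasDerivAt G (f (z t)) (z t) := by
      apply intervalIntegral.integral_hasDerivAt_right (hf_ii (z t) (hz0 t ht'))
      · exact ⟨Ioi 0, Ioi_mem_nhds (hzpos t ht'),
          hf_contOn_Ioi.aestronglyMeasurable measurableSet_Ioi⟩
      · exact hf_contOn_Ioi.continuousAt (Ioi_mem_nhds (hzpos t ht'))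
    have hsq : HasDerivAt (fun u : ℝ => 2 * K * Real.sqrt u)
        (2 * K * (1 / (2 * Real.sqrt t))) t :=
      (Real.hasDerivAt_sqrt ht.1.ne').const_mul (2 * K)
    exact (hGd.comp t hzd).sub hsq
  have hHd_nonpos : ∀ t ∈ Ioo 0 T,
      f (z t) * (K * g2 t) - 2 * K * (1 / (2 * Real.sqrt t)) ≤ 0 := by
    intro t ht
    have ht' : t ∈ Icc 0 T := Ioo_subset_Icc_self ht
    have hst : 0 < Real.sqrt t := Real.sqrt_pos.mpr ht.1
    have hab : omega m (B t) ≤ omega m (z t) :=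
      omega_mono hm (mem_Ici.mpr (hBpos t ht').le) (mem_Ici.mpr (hzpos t ht').le) (hBz t ht')
    have hb : 0 < omega m (z t) := omega_pos hm (hzpos t ht')
    rw [sub_nonpos]
    have h1 : f (z t) * (K * g2 t) ≤ (omega m (z t))⁻¹ * (K * ((Real.sqrt t)⁻¹ * omega m (z t))) := by
      simp only [hf_def, hg2_def]
      gcongr
    have h2 : (omega m (z t))⁻¹ * (K * ((Real.sqrt t)⁻¹ * omega m (z t)))
        = 2 * K * (1 / (2 * Real.sqrt t)) := by
      field_simp
    linarith
  -- H is antitone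
  have hH_anti : AntitoneOn H (Icc 0 T) := by
    apply antitoneOn_of_deriv_nonpos (convex_Icc 0 T) hHcont
    · intro t ht
      rw [interior_Icc] at ht
      exact (hHd t ht).differentiableAt.differentiableWithinAt
    · intro t ht
      rw [interior_Icc] at ht
      rw [(hHd t ht).deriv]
      exact hHd_nonpos t ht
  have hH0 : H 0 = 0 := by
    simp only [hH_def, hz_def, hG_def]
    rw [intervalIntegral.integral_same, mul_zero, add_zero,
      intervalIntegral.integral_same, Real.sqrt_zero]
    ring
  have hGle : ∀ t ∈ Icc 0 T, G (z t) ≤ 2 * K * Real.sqrt t := by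
    intro t ht
    have h := hH_anti (left_mem_Icc.mpr hT.le) ht ht.1
    rw [hH0] at h
    simp only [hH_def] at h
    linarith
  -- conclusion
  intro t ht
  by_cases hyt : y t ≤ y₀
  · rw [Set.Ioc_eq_empty (not_lt.mpr hyt)]
    simp
  · push_neg at hyt
    have hyz : y t ≤ z t := (hyB t ht).trans (hBz t ht)
    have hfint : IntegrableOn f (Ioc y₀ (z t)) :=
      (intervalIntegrable_iff_integrableOn_Ioc_of_le (hz0 t ht)).mp (hf_ii (z t) (hz0 t ht))
    have hfae : 0 ≤ᵐ[volume.restrict (Ioc y₀ (z t))] f :=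
      Filter.Eventually.of_forall fun r => inv_nonneg.mpr (omega_nonneg m r)
    calc ∫⁻ r in Set.Ioc y₀ (y t), ENNReal.ofReal (1 / omega m r)
        ≤ ∫⁻ r in Set.Ioc y₀ (z t), ENNReal.ofReal (1 / omega m r) :=
          lintegral_mono_set (Ioc_subset_Ioc le_rfl hyz)
      _ = ENNReal.ofReal (∫ r in Ioc y₀ (z t), f r) := by
          rw [ofReal_integral_eq_lintegral_ofReal hfint hfae]
          simp only [hf_def, one_div]
      _ = ENNReal.ofReal (G (z t)) := by
          congr 1
          exact (intervalIntegral.integral_of_le (hz0 t ht)).symm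
      _ ≤ ENNReal.ofReal (2 * K * Real.sqrt t) :=
          ENNReal.ofReal_le_ofReal (hGle t ht)

/-- an Osgood–Grönwall estimate with the singular weight
`s^{-1/2}`. If a continuous nonnegative function `y` on `[0,T]` satisfies
`y(t) ≤ y₀ + K ∫₀ᵗ s^{-1/2} ω(y(s)) ds`, then
`∫_{(y₀, y(t)]} dr/ω(r) ≤ 2K√t` for every `t ∈ [0,T]`. -/
theorem osgood_gronwall_weighted (m : ℝ) (hm : 0 < m) (T K y₀ : ℝ) (hT : 0 < T)
    (hK : 0 ≤ K) (hy₀ : 0 ≤ y₀) (y : ℝ → ℝ)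
    (hc : ContinuousOn y (Set.Icc 0 T))
    (hnn : ∀ t ∈ Set.Icc 0 T, 0 ≤ y t)
    (hineq : ∀ t ∈ Set.Icc 0 T,
      y t ≤ y₀ + K * ∫ s in (0:ℝ)..t, (Real.sqrt s)⁻¹ * omega m (y s)) :
    ∀ t ∈ Set.Icc 0 T,
      ∫⁻ r in Set.Ioc y₀ (y t), ENNReal.ofReal (1 / omega m r)
        ≤ ENNReal.ofReal (2 * K * Real.sqrt t) := by
  intro t ht
  set f : ℝ → ℝ≥0∞ := fun r => ENNReal.ofReal (1 / omega m r) with hf_def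
  have hfmeas : Measurable f := by
    apply Measurable.ennreal_ofReal
    exact measurable_const.div (omega_measurable m)
  have key : ∀ n : ℕ, ∫⁻ r in Set.Ioc (y₀ + ((n:ℝ) + 1)⁻¹) (y t), f r
      ≤ ENNReal.ofReal (2 * K * Real.sqrt t) := by
    intro n
    have hpos : (0:ℝ) < y₀ + ((n:ℝ) + 1)⁻¹ := by positivity
    apply main_pos m hm T K (y₀ + ((n:ℝ) + 1)⁻¹) hT hK hpos y hc hnn _ t ht
    intro s hs
    have h1 := hineq s hs
    have h2 : (0:ℝ) ≤ ((n:ℝ) + 1)⁻¹ := by positivity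
    linarith
  set F : ℕ → ℝ → ℝ≥0∞ :=
    fun n => (Set.Ioc (y₀ + ((n:ℝ) + 1)⁻¹) (y t)).indicator f with hF_def
  have hFmeas : ∀ n, Measurable (F n) := fun n => hfmeas.indicator measurableSet_Ioc
  have hFmono : Monotone F := by
    intro n n' hnn'
    apply Set.indicator_le_indicator_of_subset
    · apply Ioc_subset_Ioc_left
      have hcast : (n:ℝ) ≤ (n':ℝ) := Nat.cast_le.mpr hnn'
      have : ((n':ℝ) + 1)⁻¹ ≤ ((n:ℝ) + 1)⁻¹ := by
        apply inv_anti₀ (by positivity)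
        linarith
      linarith
    · exact fun a => zero_le
  have hsup : ∀ r, (⨆ n, F n r) = (Set.Ioc y₀ (y t)).indicator f r := by
    intro r
    by_cases hr : r ∈ Set.Ioc y₀ (y t)
    · rw [Set.indicator_of_mem hr]
      apply le_antisymm
      · apply iSup_le
        intro n
        exact Set.indicator_apply_le (fun _ => le_rfl)
      · obtain ⟨n, hn⟩ := exists_nat_gt (r - y₀)⁻¹
        have hry : 0 < r - y₀ := sub_pos.mpr hr.1
        have h1 : ((n:ℝ) + 1)⁻¹ < r - y₀ := by
          rw [inv_lt_comm₀ (by positivity) hry]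
          calc (r - y₀)⁻¹ < n := hn
          _ ≤ (n:ℝ) + 1 := by linarith
        have hmem : r ∈ Set.Ioc (y₀ + ((n:ℝ) + 1)⁻¹) (y t) := ⟨by linarith, hr.2⟩
        calc f r = F n r := (Set.indicator_of_mem hmem f).symm
        _ ≤ ⨆ n, F n r := le_iSup (fun n => F n r) n
    · rw [Set.indicator_of_notMem hr]
      apply le_antisymm _ zero_le
      apply iSup_le
      intro n
      simp only [hF_def]
      rw [Set.indicator_of_notMem]
      intro hmem
      exact hr ⟨by
        have : (0:ℝ) < ((n:ℝ) + 1)⁻¹ := by positivity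
        linarith [hmem.1], hmem.2⟩
  calc ∫⁻ r in Set.Ioc y₀ (y t), f r
      = ∫⁻ r, (Set.Ioc y₀ (y t)).indicator f r := (lintegral_indicator measurableSet_Ioc f).symm
    _ = ∫⁻ r, ⨆ n, F n r := by
        apply lintegral_congr
        intro r
        exact (hsup r).symm
    _ = ⨆ n, ∫⁻ r, F n r := lintegral_iSup hFmeas hFmono
    _ = ⨆ n : ℕ, ∫⁻ r in Set.Ioc (y₀ + ((n:ℝ) + 1)⁻¹) (y t), f r := by
        congr 1
        funext n
        exact lintegral_indicator measurableSet_Ioc f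
    _ ≤ ENNReal.ofReal (2 * K * Real.sqrt t) := iSup_le key


end
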